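/- Let n ∈ ℕ, let λ > 0 be real, and let φ₁, …, φₙ be real numbers with 0 < φ_j < π/2 for each j. Then the real symmetric n×n matrix whose (j,k) entry is (sin(φ_j + φ_k))^{−λ} is positive semidefinite. -/

import Mathlib

open MeasureTheory Set

private lemma rpow_neg_eq_gamma_integral {r lam : ℝ} (hr : 0 < r) (hlam : 0 < lam) :
    r ^ (-lam) = (Real.Gamma lam)⁻¹ *
      ∫ t : ℝ in Ioi 0, t ^ (lam - 1) * Real.exp (-(r * t)) := by
  have hΓ : Real.Gamma lam ≠ 0 := (Real.Gamma_pos_of_pos hlam).ne'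
  rw [Real.integral_rpow_mul_exp_neg_mul_Ioi hlam hr, one_div, Real.inv_rpow hr.le,
    ← Real.rpow_neg hr.le, mul_comm (Real.Gamma lam)⁻¹, mul_assoc,
    mul_inv_cancel₀ hΓ, mul_one]

private lemma integrable_aux {r lam : ℝ} (hr : 0 < r) (hlam : 0 < lam) :
    IntegrableOn (fun t : ℝ => t ^ (lam - 1) * Real.exp (-(r * t))) (Ioi 0) := by
  have := integrableOn_rpow_mul_exp_neg_mul_rpow (p := 1) (s := lam - 1) (b := r)
    (by linarith) one_pos hr
  refine this.congr_fun (fun t ht => ?_) measurableSet_Ioi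
  beta_reduce
  rw [Real.rpow_one, neg_mul]

/-- For real `λ > 0` and real `φ₁, …, φₙ` with `0 < φ_j < π/2`, the real symmetric matrix
with `(j,k)` entry `(sin(φ_j + φ_k))^{-λ}` is positive semidefinite. -/
theorem inv_sin_pow_matrix_posSemidef (n : ℕ) (lam : ℝ) (hlam : 0 < lam)
    (φ : Fin n → ℝ) (hφ0 : ∀ j, 0 < φ j) (hφ1 : ∀ j, φ j < Real.pi / 2) :
    ∀ c : Fin n → ℝ,
      0 ≤ ∑ j : Fin n, ∑ k : Fin n,
        Real.sin (φ j + φ k) ^ (-lam) * c j * c k := by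
  intro c
  set x : Fin n → ℝ := fun j => Real.tan (φ j) with hxdef
  have hx : ∀ j, 0 < x j := fun j =>
    Real.tan_pos_of_pos_of_lt_pi_div_two (hφ0 j) (hφ1 j)
  have hcos : ∀ j, 0 < Real.cos (φ j) := fun j =>
    Real.cos_pos_of_mem_Ioo ⟨by linarith [Real.pi_pos, hφ0 j], hφ1 j⟩
  set d : Fin n → ℝ := fun j => Real.cos (φ j) ^ (-lam) * c j with hddef
  have hsin : ∀ j k, Real.sin (φ j + φ k)
      = Real.cos (φ j) * Real.cos (φ k) * (x j + x k) := by
    intro j k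
    have h1 := (hcos j).ne'
    have h2 := (hcos k).ne'
    simp only [hxdef, Real.sin_add, Real.tan_eq_sin_div_cos]
    field_simp
  -- Step 1: rewrite each entry
  have step1 : ∀ j k, Real.sin (φ j + φ k) ^ (-lam) * c j * c k
      = (x j + x k) ^ (-lam) * d j * d k := by
    intro j k
    rw [hsin j k, Real.mul_rpow (mul_pos (hcos j) (hcos k)).le (add_pos (hx j) (hx k)).le,
      Real.mul_rpow (hcos j).le (hcos k).le, hddef]
    ring
  -- Step 2: Gamma integral representation with weights pushed inside
  have step2 : ∀ j k, (x j + x k) ^ (-lam) * d j * d k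
      = (Real.Gamma lam)⁻¹ * ∫ t : ℝ in Ioi 0,
          (t ^ (lam - 1) * Real.exp (-((x j + x k) * t))) * (d j * d k) := by
    intro j k
    rw [integral_mul_const, rpow_neg_eq_gamma_integral (add_pos (hx j) (hx k)) hlam]
    ring
  calc ∑ j : Fin n, ∑ k : Fin n, Real.sin (φ j + φ k) ^ (-lam) * c j * c k
      = ∑ p : Fin n × Fin n, (Real.Gamma lam)⁻¹ * ∫ t : ℝ in Ioi 0,
          (t ^ (lam - 1) * Real.exp (-((x p.1 + x p.2) * t))) * (d p.1 * d p.2) := by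
        rw [Fintype.sum_prod_type]
        exact Finset.sum_congr rfl fun j _ => Finset.sum_congr rfl fun k _ => by
          rw [step1 j k, step2 j k]
    _ = (Real.Gamma lam)⁻¹ * ∫ t : ℝ in Ioi 0, ∑ p : Fin n × Fin n,
          (t ^ (lam - 1) * Real.exp (-((x p.1 + x p.2) * t))) * (d p.1 * d p.2) := by
        rw [← Finset.mul_sum, integral_finset_sum]
        intro p _
        exact (integrable_aux (add_pos (hx p.1) (hx p.2)) hlam).mul_const _
    _ ≥ 0 := by
        apply mul_nonneg (by positivity)
        apply setIntegral_nonneg measurableSet_Ioi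
        intro t ht
        have key : ∑ p : Fin n × Fin n,
            (t ^ (lam - 1) * Real.exp (-((x p.1 + x p.2) * t))) * (d p.1 * d p.2)
            = t ^ (lam - 1) * (∑ j : Fin n, d j * Real.exp (-(x j * t))) ^ 2 := by
          rw [sq, Finset.sum_mul_sum, Fintype.sum_prod_type, Finset.mul_sum]
          refine Finset.sum_congr rfl fun j _ => ?_
          rw [Finset.mul_sum]
          refine Finset.sum_congr rfl fun k _ => ?_
          rw [add_mul, neg_add, Real.exp_add]
          ring
        rw [key]
        exact mul_nonneg (Real.rpow_nonneg (le_of_lt ht) _) (sq_nonneg _)
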